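/- Let R be a commutative ring, n a positive integer, and A = R[X₁, ..., Xₙ] the polynomial ring in n indeterminates over R. Then the set of associated primes of A as a module over itself equals { pA : p is an associated prime of R as a module over itself }, where pA denotes the extension of the prime ideal p of R to A. -/

import Mathlib

open Polynomial

section Transfer

variable {R S : Type*} [CommRing R] [CommRing S]

lemma memRC {A : Type*} [CommRing A] (x g : A) :
    g ∈ ((⊥ : Submodule A A).colon {x}).radical ↔ ∃ k : ℕ, g ^ k * x = 0 := by
  rw [Ideal.mem_radical_iff]
  simp only [Submodule.mem_colon_singleton, Submodule.mem_bot, smul_eq_mul]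

lemma map_annihilator_span_singleton (e : R ≃+* S) (x : R) :
    Ideal.map (e : R →+* S) (((⊥ : Submodule R R).colon {x}).radical)
      = ((⊥ : Submodule S S).colon {e x}).radical := by
  ext s
  rw [Ideal.map_comap_of_equiv, Ideal.mem_comap, memRC, memRC]
  constructor
  · rintro ⟨k, h⟩
    have := congrArg e h
    exact ⟨k, by simpa using this⟩
  · rintro ⟨k, h⟩
    have := congrArg e.symm h
    exact ⟨k, by simpa using this⟩

lemma assoc_subset_of_equiv (e : R ≃+* S) :
    (Ideal.map (e : R →+* S)) '' associatedPrimes R R ⊆ associatedPrimes S S := by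
  rintro _ ⟨p, ⟨hp, x, rfl⟩, rfl⟩
  refine ⟨?_, e x, map_annihilator_span_singleton e x⟩
  rw [Ideal.map_comap_of_equiv]
  exact hp.comap _

lemma associatedPrimes_of_equiv (e : R ≃+* S) :
    associatedPrimes S S = (Ideal.map (e : R →+* S)) '' associatedPrimes R R := by
  refine le_antisymm ?_ (assoc_subset_of_equiv e)
  intro q hq
  have h2 := assoc_subset_of_equiv e.symm ⟨q, hq, rfl⟩
  refine ⟨Ideal.map (e.symm : S →+* R) q, h2, ?_⟩
  rw [Ideal.map_map]
  have : ((e : R →+* S).comp (e.symm : S →+* R)) = RingHom.id S := by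
    ext s; simp
  rw [this, Ideal.map_id]

end Transfer

section Poly

variable {R : Type*} [CommRing R]

lemma ann_span_C (a : R) (hp : ((⊥ : Submodule R R).colon {a}).radical.IsPrime) :
    ((⊥ : Submodule R[X] R[X]).colon {(Polynomial.C a : R[X])}).radical
      = Ideal.map (Polynomial.C : R →+* R[X]) (((⊥ : Submodule R R).colon {a}).radical) := by
  haveI := hp
  apply le_antisymm
  · rw [(Ideal.isPrime_map_C_of_isPrime (P := ((⊥ : Submodule R R).colon {a}).radical)).radical_le_iff]
    intro g hg
    rw [Submodule.mem_colon_singleton, Submodule.mem_bot, smul_eq_mul] at hg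
    rw [Ideal.mem_map_C_iff]
    intro n
    apply Ideal.le_radical
    rw [Submodule.mem_colon_singleton, Submodule.mem_bot, smul_eq_mul]
    have := congrArg (fun q => Polynomial.coeff q n) hg
    simpa [Polynomial.coeff_mul_C] using this
  · rw [Ideal.map_le_iff_le_comap]
    intro c hc
    rw [Ideal.mem_comap]
    rw [memRC] at hc ⊢
    obtain ⟨k, hk⟩ := hc
    exact ⟨k, by rw [← map_pow, ← map_mul, hk, map_zero]⟩

theorem associatedPrimes_polynomial :
    associatedPrimes R[X] R[X] =
      (Ideal.map (Polynomial.C : R →+* R[X])) '' associatedPrimes R R := by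
  apply le_antisymm
  · rintro I ⟨hI, f₀, hf₀⟩
    -- choose an element of minimal natDegree whose annihilator is I
    have hex : ∃ m : ℕ, ∃ f : R[X], f.natDegree = m ∧
        I = ((⊥ : Submodule R[X] R[X]).colon {f}).radical :=
      ⟨f₀.natDegree, f₀, rfl, hf₀⟩
    classical
    obtain ⟨f, hfdeg, hf⟩ := Nat.find_spec hex
    have hmin : ∀ g : R[X], I = ((⊥ : Submodule R[X] R[X]).colon {g}).radical →
        f.natDegree ≤ g.natDegree := by
      intro g hg
      rw [hfdeg]
      exact Nat.find_le ⟨g, rfl, hg⟩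
    have hfne : f ≠ 0 := by
      rintro rfl
      apply hI.ne_top
      rw [hf, eq_top_iff]
      intro g _
      apply Ideal.le_radical
      rw [Submodule.mem_colon_singleton, smul_zero]
      exact Submodule.zero_mem _
    set a : R := f.leadingCoeff with ha
    -- membership in I is annihilation of f
    have hmem : ∀ g : R[X], g ∈ I ↔ ∃ k : ℕ, g ^ k * f = 0 := by
      intro g
      rw [hf, memRC]
    -- key minimality consequence
    have key : ∀ b : R, b * a = 0 → Polynomial.C b ∈ I := by
      intro b hb
      by_contra hCb
      have hbf : Polynomial.C b * f ≠ 0 := by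
        intro h0
        exact hCb ((hmem _).2 ⟨1, by rw [pow_one]; exact h0⟩)
      have hann : I = ((⊥ : Submodule R[X] R[X]).colon {Polynomial.C b * f}).radical := by
        apply le_antisymm
        · intro g hg
          rw [memRC]
          rw [hmem] at hg
          obtain ⟨k, hk⟩ := hg
          exact ⟨k, by rw [mul_left_comm, hk, mul_zero]⟩
        · intro g hg
          rw [memRC] at hg
          obtain ⟨k, hk⟩ := hg
          have : g ^ k * Polynomial.C b ∈ I := by
            rw [hmem]; exact ⟨1, by rw [pow_one, mul_assoc]; exact hk⟩
          rcases hI.mem_or_mem this with h | h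
          · exact hI.mem_of_pow_mem k h
          · exact absurd h hCb
      have hle := hmin _ hann
      -- but natDegree (C b * f) < natDegree f
      have hcoeff : (Polynomial.C b * f).coeff f.natDegree = 0 := by
        rw [Polynomial.coeff_C_mul]
        rw [Polynomial.coeff_natDegree] at *
        exact hb
      have hdle : (Polynomial.C b * f).natDegree ≤ f.natDegree := by
        simpa using Polynomial.natDegree_mul_le (p := Polynomial.C b) (q := f)
      have hdlt : (Polynomial.C b * f).natDegree < f.natDegree := by
        rcases lt_or_eq_of_le hdle with h | h
        · exact h
        · exfalso
          apply hbf
          apply Polynomial.leadingCoeff_eq_zero.mp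
          rw [← Polynomial.coeff_natDegree, h]
          exact hcoeff
      omega
    -- the contracted ideal
    set p : Ideal R := ((⊥ : Submodule R R).colon {a}).radical with hp
    have hpa : ∀ b : R, b ∈ p ↔ ∃ k : ℕ, b ^ k * a = 0 := fun b => by
      rw [hp, memRC]
    have hpC : ∀ b : R, b ∈ p ↔ Polynomial.C b ∈ I := by
      intro b
      rw [hpa]
      constructor
      · rintro ⟨k, h⟩
        have := key _ h
        rw [map_pow] at this
        exact hI.mem_of_pow_mem k this
      · intro h
        obtain ⟨k, hk⟩ := (hmem _).1 h
        rw [← map_pow] at hk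
        have := congrArg (fun q => Polynomial.coeff q f.natDegree) hk
        simp only [Polynomial.coeff_C_mul, Polynomial.coeff_zero, Polynomial.coeff_natDegree] at this
        exact ⟨k, this⟩
    have hpcomap : p = I.comap (Polynomial.C : R →+* R[X]) := by
      ext b; rw [Ideal.mem_comap]; exact hpC b
    have hpprime : p.IsPrime := by rw [hpcomap]; exact hI.comap _
    refine ⟨p, ⟨hpprime, a, rfl⟩, ?_⟩
    -- map C p = I
    apply le_antisymm
    · -- easy inclusion
      rw [Ideal.map_le_iff_le_comap]
      intro b hb
      rw [Ideal.mem_comap, ← hpC]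
      exact hb
    · -- hard inclusion: every coefficient of g ∈ I lies in p
      intro g hg
      rw [Ideal.mem_map_C_iff]
      -- strong induction on natDegree g
      have main : ∀ N : ℕ, ∀ g : R[X], g.natDegree ≤ N → g ∈ I → ∀ i, g.coeff i ∈ p := by
        intro N
        induction N with
        | zero =>
          intro g hgN hgf i
          have hg0 : g = Polynomial.C (g.coeff 0) := Polynomial.eq_C_of_natDegree_eq_zero (by omega)
          rcases Nat.eq_zero_or_pos i with rfl | hi
          · rw [hpC, ← hg0]
            exact hgf
          · rw [Polynomial.coeff_eq_zero_of_natDegree_lt (by omega)]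
            exact p.zero_mem
        | succ N ih =>
          intro g hgN hgf i
          by_cases hgz : g = 0
          · simp [hgz]
          set m := g.natDegree with hm
          set b := g.leadingCoeff with hbdef
          -- top coefficient
          obtain ⟨k, hk⟩ := (hmem g).1 hgf
          have htop : b ^ k * a = 0 := by
            have hq : (g ^ k).coeff (k * m) = b ^ k := Polynomial.coeff_pow_mul_natDegree g k
            rcases (Polynomial.natDegree_pow_le (p := g) (n := k)).lt_or_eq with h | h
            · rw [← hq, Polynomial.coeff_eq_zero_of_natDegree_lt h, zero_mul]
            · have := congrArg (fun q => Polynomial.coeff q ((g ^ k).natDegree + f.natDegree)) hk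
              simp only [Polynomial.coeff_mul_degree_add_degree, Polynomial.coeff_zero] at this
              rw [Polynomial.leadingCoeff, h, hq] at this
              exact this
          have hbp : b ∈ p := (hpa b).2 ⟨k, htop⟩
          have hCbI : Polynomial.C b ∈ I := (hpC b).1 hbp
          -- erase the lead
          have herase : g.eraseLead ∈ I := by
            have h1 : g.eraseLead = g - Polynomial.C b * Polynomial.X ^ m :=
              (Polynomial.self_sub_C_mul_X_pow g).symm
            rw [h1]
            exact I.sub_mem hgf (I.mul_mem_right _ hCbI)
          rcases Polynomial.eraseLead_natDegree_lt_or_eraseLead_eq_zero g with hlt | hzero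
          · have hIH := ih g.eraseLead (by omega) herase
            rcases eq_or_ne i m with rfl | hne
            · exact hbp
            · have := hIH i
              rwa [Polynomial.eraseLead_coeff_of_ne i hne] at this
          · rcases eq_or_ne i m with rfl | hne
            · exact hbp
            · have : g.coeff i = 0 := by
                have := Polynomial.eraseLead_coeff_of_ne (f := g) i hne
                rw [hzero] at this
                simpa using this.symm
              rw [this]; exact p.zero_mem
      exact main g.natDegree g (le_refl _) hg
  · rintro _ ⟨p, ⟨hp, a, rfl⟩, rfl⟩
    haveI := hp
    exact ⟨Ideal.isPrime_map_C_of_isPrime, Polynomial.C a, (ann_span_C a hp).symm⟩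

end Poly

section Mv

variable {R : Type*} [CommRing R]

theorem associatedPrimes_mvPolynomial_aux (n : ℕ) :
    associatedPrimes (MvPolynomial (Fin n) R) (MvPolynomial (Fin n) R) =
      (fun p : Ideal R => p.map (MvPolynomial.C : R →+* MvPolynomial (Fin n) R)) ''
        associatedPrimes R R := by
  induction n with
  | zero =>
    rw [associatedPrimes_of_equiv (MvPolynomial.isEmptyRingEquiv R (Fin 0)).symm]
    apply Set.image_congr'
    intro p
    congr 1
  | succ n ih =>
    rw [associatedPrimes_of_equiv (MvPolynomial.finSuccEquiv R n).toRingEquiv.symm,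
      associatedPrimes_polynomial, ih]
    rw [Set.image_image, Set.image_image]
    apply Set.image_congr'
    intro p
    show Ideal.map _ (Ideal.map _ (Ideal.map _ p)) = _
    rw [Ideal.map_map, Ideal.map_map]
    congr 1
    refine RingHom.ext fun r => ?_
    have h := RingHom.congr_fun (MvPolynomial.finSuccEquiv_comp_C_eq_C (R := R) n) r
    exact h

end Mv

/-- For a commutative ring `R` and a positive integer `n`, the associated primes of the
polynomial ring `A = R[X₁, …, Xₙ]` as a module over itself are exactly the extensions
`pA` of the associated primes `p` of `R` as a module over itself. -/
theorem associatedPrimes_mvPolynomial {R : Type*} [CommRing R] (n : ℕ) (hn : 0 < n) :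
    associatedPrimes (MvPolynomial (Fin n) R) (MvPolynomial (Fin n) R) =
      (fun p : Ideal R => p.map (MvPolynomial.C : R →+* MvPolynomial (Fin n) R)) ''
        associatedPrimes R R := by
  exact associatedPrimes_mvPolynomial_aux n
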